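/- Let F = F_x ∪ F_y where F_x is a monotone lattice path from (i,j) to (m,n) (x-vertices) and F_y is a pair of non-intersecting monotone lattice paths from (1,1) to (i,n) and from (2,1) to (m,j) (y-vertices), with (i,j) ≠ (m,n). Then the squarefree monomial corresponding to F is not divisible by any element of the families A, B, C, D, E. That is, F is a face of Δ_{LT(J)}. -/

import Mathlib

/-- A single step in a monotone lattice path: one unit down or one unit right. -/
def IsStep (p q : ℕ × ℕ) : Prop := q = (p.1 + 1, p.2) ∨ q = (p.1, p.2 + 1)

/-- `L` is a monotone lattice path from `(a,b)` to `(c,d)`. -/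
def IsPath (a b c d : ℕ) (L : List (ℕ × ℕ)) : Prop :=
  L ≠ [] ∧ L.head? = some (a, b) ∧ L.getLast? = some (c, d) ∧ L.Chain' IsStep

/-- Vertices of the complex: `(true, i, j)` is `x_{i,j}`, `(false, i, j)` is `y_{i,j}`. -/
abbrev V : Type := Bool × ℕ × ℕ

def InGrid (m n : ℕ) (v : V) : Prop :=
  1 ≤ v.2.1 ∧ v.2.1 ≤ m ∧ 1 ≤ v.2.2 ∧ v.2.2 ≤ n

/-- A face of `Δ_{LT(J)}`: a set of vertices in the grid whose squarefree monomial
is divisible by no element of the families A, B, C, D, E. -/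
def IsFace (m n : ℕ) (F : Finset V) : Prop :=
  (∀ v ∈ F, InGrid m n v) ∧
  (∀ i j k l : ℕ, i < j → k < l → ¬((true, i, l) ∈ F ∧ (true, j, k) ∈ F)) ∧
  (∀ i j k l : ℕ, i < j → k < l → ¬((true, i, k) ∈ F ∧ (false, j, l) ∈ F)) ∧
  (∀ i j k p q r : ℕ, i < j → j ≤ k → p < q → q < r →
      ¬((true, k, p) ∈ F ∧ (false, j, q) ∈ F ∧ (false, i, r) ∈ F)) ∧
  (∀ i j k p q r : ℕ, i < j → j < k → p < q → q ≤ r →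
      ¬((true, i, r) ∈ F ∧ (false, j, q) ∈ F ∧ (false, k, p) ∈ F)) ∧
  (∀ i j k p q r : ℕ, i < j → j < k → p < q → q < r →
      ¬((false, i, r) ∈ F ∧ (false, j, q) ∈ F ∧ (false, k, p) ∈ F))

/-- A facet: an inclusion-maximal face. -/
def IsFacet (m n : ℕ) (F : Finset V) : Prop :=
  IsFace m n F ∧ ∀ G : Finset V, IsFace m n G → F ⊆ G → F = G

private lemma isStep_le {p q : ℕ × ℕ} (h : IsStep p q) : p.1 ≤ q.1 ∧ p.2 ≤ q.2 := by
  rcases h with h | h <;> subst h <;> simp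

private lemma path_pairwise {a b c d : ℕ} {L : List (ℕ × ℕ)} (h : IsPath a b c d L) :
    L.Pairwise (fun p q => p.1 ≤ q.1 ∧ p.2 ≤ q.2) := by
  haveI : IsTrans (ℕ × ℕ) (fun p q => p.1 ≤ q.1 ∧ p.2 ≤ q.2) :=
    ⟨fun a b c h1 h2 => ⟨h1.1.trans h2.1, h1.2.trans h2.2⟩⟩
  haveI : Trans (fun p q : ℕ × ℕ => p.1 ≤ q.1 ∧ p.2 ≤ q.2) (fun p q : ℕ × ℕ => p.1 ≤ q.1 ∧ p.2 ≤ q.2)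
      (fun p q : ℕ × ℕ => p.1 ≤ q.1 ∧ p.2 ≤ q.2) :=
    ⟨fun h1 h2 => ⟨h1.1.trans h2.1, h1.2.trans h2.2⟩⟩
  exact List.isChain_iff_pairwise.mp
    (List.IsChain.imp (fun a b hs => isStep_le hs) h.2.2.2)

private lemma path_comparable {a b c d : ℕ} {L : List (ℕ × ℕ)} (h : IsPath a b c d L)
    {p q : ℕ × ℕ} (hp : p ∈ L) (hq : q ∈ L) :
    (p.1 ≤ q.1 ∧ p.2 ≤ q.2) ∨ (q.1 ≤ p.1 ∧ q.2 ≤ p.2) := by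
  rcases eq_or_ne p q with rfl | hne
  · exact Or.inl ⟨le_refl _, le_refl _⟩
  · have hpw : L.Pairwise
        (fun p q : ℕ × ℕ => (p.1 ≤ q.1 ∧ p.2 ≤ q.2) ∨ (q.1 ≤ p.1 ∧ q.2 ≤ p.2)) :=
      (path_pairwise h).imp fun h => Or.inl h
    haveI : Std.Symm (fun p q : ℕ × ℕ => (p.1 ≤ q.1 ∧ p.2 ≤ q.2) ∨ (q.1 ≤ p.1 ∧ q.2 ≤ p.2)) :=
      ⟨fun x y hxy => hxy.elim Or.inr Or.inl⟩
    exact hpw.forall hp hq hne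

private lemma pairwise_head {α : Type*} {R : α → α → Prop} {L : List α} {a p : α}
    (hL : L.Pairwise R) (hh : L.head? = some a) (hp : p ∈ L) : a = p ∨ R a p := by
  cases L with
  | nil => simp at hp
  | cons x t =>
    simp only [List.head?_cons, Option.some.injEq] at hh
    subst hh
    rcases List.mem_cons.mp hp with rfl | hp
    · exact Or.inl rfl
    · exact Or.inr ((List.pairwise_cons.mp hL).1 p hp)

private lemma path_bounds {a b c d : ℕ} {L : List (ℕ × ℕ)} (h : IsPath a b c d L)
    {p : ℕ × ℕ} (hp : p ∈ L) : a ≤ p.1 ∧ p.1 ≤ c ∧ b ≤ p.2 ∧ p.2 ≤ d := by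
  have h1 := pairwise_head (path_pairwise h) h.2.1 hp
  have hpw2 : L.reverse.Pairwise (fun p q : ℕ × ℕ => q.1 ≤ p.1 ∧ q.2 ≤ p.2) := by
    rw [List.pairwise_reverse]; exact path_pairwise h
  have h2 := pairwise_head hpw2 (by rw [List.head?_reverse]; exact h.2.2.1)
    (List.mem_reverse.mpr hp)
  obtain ⟨p1, p2⟩ := p
  rcases h1 with h1 | h1 <;> rcases h2 with h2 | h2 <;>
    simp_all [Prod.ext_iff] <;> omega

private lemma path_endpoint_le {a b c d : ℕ} {L : List (ℕ × ℕ)}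
    (h : IsPath a b c d L) : a ≤ c ∧ b ≤ d := by
  have hmem : (a, b) ∈ L :=
    List.mem_of_mem_head? (by simp [Option.mem_def, h.2.1])
  have := path_bounds h hmem
  exact ⟨this.2.1, this.2.2.2⟩

theorem paths_give_face (m n i j : ℕ) (hm : 2 ≤ m) (hmn : m ≤ n)
    (Lx P Q : List (ℕ × ℕ)) (hne : (i, j) ≠ (m, n))
    (hLx : IsPath i j m n Lx)
    (hP : IsPath 1 1 i n P) (hQ : IsPath 2 1 m j Q)
    (hdisj : ∀ v ∈ P, v ∉ Q) :
    IsFace m n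
      ((Lx.toFinset.image fun p => ((true, p) : V)) ∪
        ((P.toFinset ∪ Q.toFinset).image fun p => ((false, p) : V))) := by
  set F := ((Lx.toFinset.image fun p => ((true, p) : V)) ∪
        ((P.toFinset ∪ Q.toFinset).image fun p => ((false, p) : V))) with hF
  have memT : ∀ p : ℕ × ℕ, ((true, p) : V) ∈ F ↔ p ∈ Lx := by
    intro p
    simp [hF, Finset.mem_union, Finset.mem_image, List.mem_toFinset]
  have memF : ∀ p : ℕ × ℕ, ((false, p) : V) ∈ F ↔ p ∈ P ∨ p ∈ Q := by
    intro p
    simp [hF, Finset.mem_union, Finset.mem_image, List.mem_toFinset]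
  have hi1 : 1 ≤ i := (path_endpoint_le hP).1
  have hj1 : 1 ≤ j := (path_endpoint_le hQ).2
  have him : i ≤ m := (path_endpoint_le hLx).1
  have hjn : j ≤ n := (path_endpoint_le hLx).2
  refine ⟨?_, ?_, ?_, ?_, ?_, ?_⟩
  · rintro ⟨b, p⟩ hv
    cases b
    · rw [memF] at hv
      rcases hv with hv | hv
      · have := path_bounds hP hv
        exact ⟨this.1, this.2.1.trans him, this.2.2.1, this.2.2.2⟩
      · have := path_bounds hQ hv
        exact ⟨le_trans (by norm_num) this.1, this.2.1, this.2.2.1,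
          this.2.2.2.trans hjn⟩
    · rw [memT] at hv
      have := path_bounds hLx hv
      exact ⟨hi1.trans this.1, this.2.1, hj1.trans this.2.2.1, this.2.2.2⟩
  · intro i' j' k l hij hkl ⟨h1, h2⟩
    rw [memT] at h1 h2
    have := path_comparable hLx h1 h2
    simp only [] at this; omega
  · intro i' j' k l hij hkl ⟨h1, h2⟩
    rw [memT] at h1
    rw [memF] at h2
    have hb1 := path_bounds hLx h1
    rcases h2 with h2 | h2
    · have hb2 := path_bounds hP h2
      simp only [] at hb1 hb2; omega
    · have hb2 := path_bounds hQ h2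
      simp only [] at hb1 hb2; omega
  · intro i' j' k' p q r h1 h2 h3 h4 ⟨hx, hy1, hy2⟩
    rw [memT] at hx
    rw [memF] at hy1 hy2
    have hbx := path_bounds hLx hx
    have hy1P : (j', q) ∈ P := by
      rcases hy1 with h | h
      · exact h
      · have := path_bounds hQ h; simp only [] at this hbx; omega
    have hy2P : (i', r) ∈ P := by
      rcases hy2 with h | h
      · exact h
      · have := path_bounds hQ h; simp only [] at this hbx; omega
    have := path_comparable hP hy1P hy2P
    simp only [] at this; omega
  · intro i' j' k' p q r h1 h2 h3 h4 ⟨hx, hy1, hy2⟩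
    rw [memT] at hx
    rw [memF] at hy1 hy2
    have hbx := path_bounds hLx hx
    have hy1Q : (j', q) ∈ Q := by
      rcases hy1 with h | h
      · have := path_bounds hP h; simp only [] at this hbx; omega
      · exact h
    have hy2Q : (k', p) ∈ Q := by
      rcases hy2 with h | h
      · have := path_bounds hP h; simp only [] at this hbx; omega
      · exact h
    have := path_comparable hQ hy1Q hy2Q
    simp only [] at this; omega
  · intro i' j' k' p q r h1 h2 h3 h4 ⟨hy1, hy2, hy3⟩
    rw [memF] at hy1 hy2 hy3
    rcases hy1 with hy1 | hy1 <;> rcases hy2 with hy2 | hy2 <;>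
      rcases hy3 with hy3 | hy3
    · have := path_comparable hP hy1 hy2; simp only [] at this; omega
    · have := path_comparable hP hy1 hy2; simp only [] at this; omega
    · have := path_comparable hP hy1 hy3; simp only [] at this; omega
    · have := path_comparable hQ hy2 hy3; simp only [] at this; omega
    · have := path_comparable hP hy2 hy3; simp only [] at this; omega
    · have := path_comparable hQ hy1 hy3; simp only [] at this; omega
    · have := path_comparable hQ hy1 hy2; simp only [] at this; omega
    · have := path_comparable hQ hy1 hy2; simp only [] at this; omega
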